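/- If the pair of positive integers (a, b) satisfies the Pell equation a² − d·b² = 1 with a ≥ 2, then the continued fraction expansion of b·√d is [a−1; overline(1, 2(a−1))], i.e., b·√d = (a−1) + 1/β where β = [overline(1, 2(a−1))] is the purely periodic continued fraction with period (1, 2(a−1)). -/

import Mathlib

/-- Iteration of the Gauss-type map producing the complete quotients of the
continued fraction expansion of `α`. -/
noncomputable def cfIter (α : ℝ) : ℕ → ℝ
  | 0 => α
  | n + 1 => (Int.fract (cfIter α n))⁻¹

/-- The `n`-th partial quotient of the continued fraction of `α`. -/
noncomputable def cfTerm (α : ℝ) (n : ℕ) : ℤ := ⌊cfIter α n⌋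

/-- If `(a, b)` is a positive solution of the Pell equation `a² - d b² = 1` with `a ≥ 2`,
then `b √d = [a - 1; overline(1, 2(a-1))]`, i.e. the partial quotients of `b √d` are
`a - 1` followed by the repeating block `(1, 2(a-1))`. -/
theorem stmt0 (d : ℕ) (hd : 0 < d) (hsq : ¬ IsSquare d) (a b : ℕ) (ha : 2 ≤ a) (hb : 0 < b)
    (hpell : (a : ℤ) ^ 2 - (d : ℤ) * (b : ℤ) ^ 2 = 1) :
    cfTerm ((b : ℝ) * Real.sqrt d) 0 = (a : ℤ) - 1 ∧
      ∀ n : ℕ, 0 < n →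
        cfTerm ((b : ℝ) * Real.sqrt d) n =
          if n % 2 = 1 then 1 else 2 * ((a : ℤ) - 1) := by
  have hA2 : (2:ℝ) ≤ (a:ℝ) := by exact_mod_cast ha
  have hpellR : ((a:ℝ))^2 - (d:ℝ) * (b:ℝ)^2 = 1 := by exact_mod_cast hpell
  set A : ℝ := (a:ℝ) with hA
  set α : ℝ := (b : ℝ) * Real.sqrt d with hαdef
  have hsd : (Real.sqrt d)^2 = (d:ℝ) := Real.sq_sqrt (by positivity)
  have hα2 : α^2 = A^2 - 1 := by
    rw [hαdef, mul_pow, hsd]; nlinarith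
  have hα0 : 0 ≤ α := by rw [hαdef]; positivity
  have h1 : A - 1 < α := by nlinarith
  have h2 : α < A := by nlinarith
  have h3 : A - 1/2 < α := by nlinarith
  set t : ℝ := α - (A - 1) with htdef
  have ht0 : 0 < t := by simp [htdef]; linarith
  have ht1 : t < 1 := by simp [htdef]; linarith
  have ht2 : 1/2 < t := by simp [htdef]; linarith
  set x₁ : ℝ := t⁻¹ with hx1def
  set x₂ : ℝ := α + (A - 1) with hx2def
  -- floor of α
  have hfl0 : ⌊α⌋ = (a : ℤ) - 1 := by
    rw [Int.floor_eq_iff]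
    constructor <;> push_cast <;> [linarith; linarith]
  have hfr0 : Int.fract α = t := by
    rw [Int.fract, hfl0]; push_cast; ring
  -- x₁ bounds and floor
  have hx1lb : 1 < x₁ := by
    rw [hx1def]; rw [lt_inv_comm₀ one_pos ht0]; simpa using ht1
  have hx1ub : x₁ < 2 := by
    rw [hx1def, inv_lt_comm₀ ht0 two_pos]; linarith
  have hfl1 : ⌊x₁⌋ = 1 := by
    rw [Int.floor_eq_iff]
    constructor <;> push_cast <;> linarith
  have hfr1 : Int.fract x₁ = x₁ - 1 := by rw [Int.fract, hfl1]; push_cast; ring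
  -- (fract x₁)⁻¹ = x₂
  have hstep1 : (Int.fract x₁)⁻¹ = x₂ := by
    rw [hfr1]
    refine inv_eq_of_mul_eq_one_left ?_
    have ht0' : t ≠ 0 := ne_of_gt ht0
    rw [hx2def, hx1def, htdef]
    have ht0'' : α - (A - 1) ≠ 0 := ne_of_gt (by linarith)
    field_simp
    nlinarith [hα2]
  -- x₂ floor
  have hfl2 : ⌊x₂⌋ = 2 * ((a:ℤ) - 1) := by
    rw [Int.floor_eq_iff]
    constructor <;> push_cast <;> [linarith; linarith]
  have hfr2 : Int.fract x₂ = t := by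
    rw [Int.fract, hfl2]; push_cast; rw [hx2def, htdef]; ring
  have hstep2 : (Int.fract x₂)⁻¹ = x₁ := by rw [hfr2, hx1def]
  -- the iterates
  have hiter : ∀ n : ℕ, cfIter α (n+1) = if n % 2 = 0 then x₁ else x₂ := by
    intro n
    induction n with
    | zero => simp [cfIter, hfr0, hx1def]
    | succ m ih =>
      have hrec : cfIter α (m+1+1) = (Int.fract (cfIter α (m+1)))⁻¹ := rfl
      rcases Nat.even_or_odd m with hm | hm
      · have h0 : m % 2 = 0 := Nat.even_iff.mp hm
        rw [if_pos h0] at ih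
        rw [hrec, ih, hstep1, if_neg (by omega)]
      · have h0 : m % 2 = 1 := Nat.odd_iff.mp hm
        rw [if_neg (by omega)] at ih
        rw [hrec, ih, hstep2, if_pos (by omega)]
  constructor
  · show (⌊cfIter α 0⌋ : ℤ) = (a:ℤ) - 1
    simpa [cfIter] using hfl0
  · intro n hn
    obtain ⟨m, rfl⟩ : ∃ m, n = m + 1 := ⟨n - 1, by omega⟩
    show (⌊cfIter α (m+1)⌋ : ℤ) = _
    rw [hiter m]
    rcases Nat.even_or_odd m with hm | hm
    · have h0 : m % 2 = 0 := Nat.even_iff.mp hm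
      have h1' : (m+1) % 2 = 1 := by omega
      simp [h0, h1', hfl1]
    · have h0 : m % 2 = 1 := Nat.odd_iff.mp hm
      have h1' : (m+1) % 2 = 0 := by omega
      simp [h0, h1', hfl2]
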